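/- Let X be a Banach space containing no subspace isomorphic to ℓ₁, and let (f_n) be a weak* null sequence in X*. Then limsup_n ‖f_n‖ ≤ 2β((f_n)), where β((f_n)) = sup over weakly null sequences (x_n) in B_X of limsup_n |⟨f_n, x_n⟩|. -/

import Mathlib

open Filter Topology Metric Set NormedSpace

noncomputable section

/-- `y` is a convex block subsequence of `x`. -/
def IsConvexBlock {E : Type*} [AddCommGroup E] [Module ℝ E] (x y : ℕ → E) : Prop :=
  ∃ k : ℕ → ℕ, k 0 = 0 ∧ StrictMono k ∧
    ∀ n, y n ∈ convexHull ℝ (x '' Set.Ico (k n) (k (n + 1)))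

variable (X : Type*) [NormedAddCommGroup X] [NormedSpace ℝ X]

/-- A set is weakly compact if its image in the weak topology is compact. -/
def WeaklyCompact (K : Set X) : Prop := IsCompact (toWeakSpace ℝ X '' K)

/-- A sequence is weakly null. -/
def WeaklyNull (x : ℕ → X) : Prop :=
  ∀ f : X →L[ℝ] ℝ, Tendsto (fun n => f (x n)) atTop (𝓝 0)

/-- A sequence in the dual is weak* null. -/
def WeakStarNull (f : ℕ → X →L[ℝ] ℝ) : Prop :=
  ∀ x : X, Tendsto (fun n => f n x) atTop (𝓝 0)

/-- A sequence in the dual is weak* Cauchy. -/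
def WeakStarCauchy (f : ℕ → X →L[ℝ] ℝ) : Prop :=
  ∀ x : X, ∃ L : ℝ, Tendsto (fun n => f n x) atTop (𝓝 L)

variable {X}

/-- α((f_n)) = sup over weakly compact K ⊆ B_X of limsup_n sup_{x ∈ K} |⟨f_n, x⟩|. -/
def alphaQ (f : ℕ → X →L[ℝ] ℝ) : ℝ :=
  sSup { r | ∃ K : Set X, K ⊆ closedBall 0 1 ∧ WeaklyCompact X K ∧
    r = limsup (fun n => sSup ((fun x => |f n x|) '' K)) atTop }

/-- β((f_n)) = sup over weakly null (x_n) in B_X of limsup_n |⟨f_n, x_n⟩|. -/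
def betaQ (f : ℕ → X →L[ℝ] ℝ) : ℝ :=
  sSup { r | ∃ x : ℕ → X, (∀ n, x n ∈ closedBall (0 : X) 1) ∧ WeaklyNull X x ∧
    r = limsup (fun n => |f n (x n)|) atTop }

/-- ca_{ρ*}((f_n)): measures Mackey-Cauchyness. -/
def caRho (f : ℕ → X →L[ℝ] ℝ) : ℝ :=
  sSup { r | ∃ K : Set X, K ⊆ closedBall 0 1 ∧ WeaklyCompact X K ∧
    r = ⨅ n : ℕ, sSup { t | ∃ k ≥ n, ∃ l ≥ n, ∃ x ∈ K, t = |(f k - f l) x| } }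

/-- ca((z_n)) = inf_n sup_{k,l ≥ n} ‖z_k - z_l‖. -/
def caSeq {E : Type*} [NormedAddCommGroup E] (z : ℕ → E) : ℝ :=
  ⨅ n : ℕ, sSup { r | ∃ k ≥ n, ∃ l ≥ n, r = ‖z k - z l‖ }

variable (X)

def K1 : ℝ :=
  sSup { r | ∃ f : ℕ → X →L[ℝ] ℝ, (∀ n, ‖f n‖ ≤ 1) ∧ WeakStarNull X f ∧
    r = sInf { s | ∃ g, IsConvexBlock f g ∧ s = alphaQ g } }

def K2 : ℝ :=
  sSup { r | ∃ f : ℕ → X →L[ℝ] ℝ, (∀ n, ‖f n‖ ≤ 1) ∧ WeakStarNull X f ∧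
    r = sInf { s | ∃ g, IsConvexBlock f g ∧ s = betaQ g } }

def K3 : ℝ :=
  sSup { r | ∃ f : ℕ → X →L[ℝ] ℝ, (∀ n, ‖f n‖ ≤ 1) ∧ WeakStarCauchy X f ∧
    r = sInf { s | ∃ g, IsConvexBlock f g ∧ s = caRho g } }

/-- Property (K). -/
def PropertyK : Prop :=
  ∀ f : ℕ → X →L[ℝ] ℝ, WeakStarNull X f → ∃ g, IsConvexBlock f g ∧ alphaQ g = 0

/-- The Grothendieck property: every weak* null sequence in the dual is weakly null. -/
def Grothendieck : Prop :=
  ∀ f : ℕ → X →L[ℝ] ℝ, WeakStarNull X f →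
    ∀ Φ : (X →L[ℝ] ℝ) →L[ℝ] ℝ, Tendsto (fun n => Φ (f n)) atTop (𝓝 0)

def GQ : ℝ :=
  sSup { r | ∃ f : ℕ → X →L[ℝ] ℝ, (∀ n, ‖f n‖ ≤ 1) ∧ WeakStarNull X f ∧
    r = sInf { s | ∃ g, IsConvexBlock f g ∧ s = limsup (fun n => ‖g n‖) atTop } }

def RQ : ℝ :=
  sSup { r | ∃ x : ℕ → X, (∀ n, x n ∈ closedBall (0 : X) 1) ∧
    r = sInf { s | ∃ z, IsConvexBlock x z ∧ s = caSeq z } }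

/-- weak* cluster points in the bidual of a sequence in the bidual. -/
def WStarClusterPts (u : ℕ → (X →L[ℝ] ℝ) →L[ℝ] ℝ) : Set ((X →L[ℝ] ℝ) →L[ℝ] ℝ) :=
  { z | MapClusterPt (StrongDual.toWeakDual (𝕜 := ℝ) z) atTop
      (fun n => StrongDual.toWeakDual (𝕜 := ℝ) (u n)) }

def wckQ (A : Set X) : ℝ :=
  sSup { r | ∃ x : ℕ → X, (∀ n, x n ∈ A) ∧
    r = sInf { s | ∃ z ∈ WStarClusterPts X (fun n => inclusionInDoubleDual ℝ X (x n)),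
      ∃ v : X, s = ‖z - inclusionInDoubleDual ℝ X v‖ } }

instance : Fact ((1 : ENNReal) ≤ 1) := ⟨le_rfl⟩


section RosenthalDev


namespace NWc

variable (bad : List ℕ → Prop)

/-- `t` is an initial segment of the infinite set `N`. -/
def Pref (t : List ℕ) (N : Set ℕ) : Prop :=
  t.IsChain (· < ·) ∧ (∀ a ∈ t, a ∈ N) ∧ ∀ a ∈ N, ∀ b ∈ t, a ≤ b → a ∈ t

def Accepts (s : List ℕ) (M : Set ℕ) : Prop :=
  ∀ N ⊆ M, N.Infinite → ∃ t, Pref t N ∧ bad (s ++ t)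

def Rejects (s : List ℕ) (M : Set ℕ) : Prop :=
  ∀ N ⊆ M, N.Infinite → ¬ Accepts bad s N

variable {bad}

lemma Accepts.mono {s M N} (h : Accepts bad s M) (hNM : N ⊆ M) : Accepts bad s N :=
  fun N' hN' hinf => h N' (hN'.trans hNM) hinf

lemma Rejects.mono {s M N} (h : Rejects bad s M) (hNM : N ⊆ M) : Rejects bad s N :=
  fun N' hN' hinf => h N' (hN'.trans hNM) hinf

lemma pref_nil (N : Set ℕ) : Pref [] N := by
  refine ⟨List.isChain_nil, ?_, ?_⟩ <;> simp

lemma accepts_of_bad {s : List ℕ} (h : bad s) (M : Set ℕ) : Accepts bad s M :=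
  fun N _ _ => ⟨[], pref_nil N, by simpa using h⟩

/-- helper for recursive constructions -/
lemma exists_seq {α : Sort*} {R : α → α → Prop} (init : α) (h : ∀ a, ∃ b, R a b) :
    ∃ F : ℕ → α, F 0 = init ∧ ∀ k, R (F k) (F (k + 1)) := by
  choose step hstep using h
  exact ⟨fun k => Nat.rec init (fun _ a => step a) k, rfl, fun k => hstep _⟩

lemma exists_seq' {α : Sort*} {R : ℕ → α → α → Prop} (init : α) (h : ∀ k a, ∃ b, R k a b) :
    ∃ F : ℕ → α, F 0 = init ∧ ∀ k, R k (F k) (F (k + 1)) := by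
  choose step hstep using h
  exact ⟨fun k => Nat.rec init step k, rfl, fun k => hstep _ _⟩

lemma tail_infinite {N : Set ℕ} (h : N.Infinite) (n : ℕ) : {a ∈ N | n < a}.Infinite := by
  have : {a ∈ N | n < a} = N \ {a | a ≤ n} := by
    ext a
    simp only [Set.mem_setOf_eq, Set.mem_diff, Set.mem_sep_iff, not_le]
  rw [this]
  exact h.diff (Set.finite_Iic n)


/-- Key one-step lemma: if `M` rejects `s`, we can find `n ∈ M` beyond `m₀` and an infinite
`M' ⊆ M` beyond `n` rejecting `s ++ [n]`. -/
lemma exists_step {s : List ℕ} {M : Set ℕ} (hM : M.Infinite) (hrej : Rejects bad s M) (m₀ : ℕ) :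
    ∃ n ∈ M, m₀ < n ∧ ∃ M' ⊆ M, M'.Infinite ∧ (∀ a ∈ M', n < a) ∧ Rejects bad (s ++ [n]) M' := by
  by_contra hcon
  push_neg at hcon
  -- from the negation: for every suitable n and M', there is an accepting subset
  have key : ∀ n ∈ M, m₀ < n → ∀ M' ⊆ M, M'.Infinite → (∀ a ∈ M', n < a) →
      ∃ N ⊆ M', N.Infinite ∧ Accepts bad (s ++ [n]) N := by
    intro n hn hn0 M' hM' hinf hgt
    have := hcon n hn hn0 M' hM' hinf hgt
    unfold Rejects at this
    push_neg at this
    obtain ⟨N, hN, hNinf, hNacc⟩ := this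
    exact ⟨N, hN, hNinf, hNacc⟩
  -- state: (n, A) with A ⊆ M infinite, all elements of A > n, A accepts s ++ [n]
  let St := {p : ℕ × Set ℕ // p.1 ∈ M ∧ m₀ < p.1 ∧ p.2 ⊆ M ∧ p.2.Infinite ∧
    (∀ a ∈ p.2, p.1 < a) ∧ Accepts bad (s ++ [p.1]) p.2}
  have step : ∀ p : St, ∃ q : St, q.1.1 ∈ p.1.2 ∧ q.1.2 ⊆ p.1.2 := by
    rintro ⟨⟨n, A⟩, hnM, hn0, hAM, hAinf, hAgt, hAacc⟩
    obtain ⟨n', hn'A, _⟩ := hAinf.exists_gt n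
    have hn'M : n' ∈ M := hAM hn'A
    have hn'0 : m₀ < n' := lt_trans hn0 (hAgt _ hn'A)
    have htail : {a ∈ A | n' < a}.Infinite := tail_infinite hAinf n'
    obtain ⟨N, hNsub, hNinf, hNacc⟩ := key n' hn'M hn'0 {a ∈ A | n' < a}
      (fun a ha => hAM ha.1) htail (fun a ha => ha.2)
    exact ⟨⟨⟨n', N⟩, hn'M, hn'0, fun a ha => hAM (hNsub ha).1, hNinf,
      fun a ha => (hNsub ha).2, hNacc⟩, hn'A, fun a ha => (hNsub ha).1⟩
  -- initial state
  obtain ⟨n₀, hn₀M, hn₀0⟩ := hM.exists_gt m₀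
  have htail₀ : {a ∈ M | n₀ < a}.Infinite := tail_infinite hM n₀
  obtain ⟨N₀, hN₀sub, hN₀inf, hN₀acc⟩ := key n₀ hn₀M hn₀0 {a ∈ M | n₀ < a}
    (fun a ha => ha.1) htail₀ (fun a ha => ha.2)
  have init : St := ⟨⟨n₀, N₀⟩, hn₀M, hn₀0, fun a ha => (hN₀sub ha).1, hN₀inf,
    fun a ha => (hN₀sub ha).2, hN₀acc⟩
  obtain ⟨F, hF0, hFstep⟩ := exists_seq init step
  set nn : ℕ → ℕ := fun i => (F i).1.1 with hnn
  set AA : ℕ → Set ℕ := fun i => (F i).1.2 with hAA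
  have hmem : ∀ i, nn (i + 1) ∈ AA i := fun i => (hFstep i).1
  have hsub : ∀ i, AA (i + 1) ⊆ AA i := fun i => (hFstep i).2
  have hgt : ∀ i, ∀ a ∈ AA i, nn i < a := fun i => (F i).2.2.2.2.2.1
  have hacc : ∀ i, Accepts bad (s ++ [nn i]) (AA i) := fun i => (F i).2.2.2.2.2.2
  have hAM : ∀ i, AA i ⊆ M := fun i => (F i).2.2.2.1
  have hnM : ∀ i, nn i ∈ M := fun i => (F i).2.1
  have hAAmono : ∀ {i j}, i ≤ j → AA j ⊆ AA i := by
    intro i j hij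
    induction j, hij using Nat.le_induction with
    | base => exact fun _ h => h
    | succ j hij ih => exact fun a ha => ih (hsub j ha)
  have hmono : StrictMono nn := strictMono_nat_of_lt_succ fun i => hgt i _ (hmem i)
  have hmem' : ∀ {i j}, i < j → nn j ∈ AA i := by
    intro i j hij
    obtain ⟨j', rfl⟩ : ∃ j', j = j' + 1 := ⟨j - 1, by omega⟩
    exact hAAmono (by omega) (hmem j')
  -- N := range nn accepts s, contradicting hrej
  set N : Set ℕ := Set.range nn with hN
  have hNM : N ⊆ M := by rintro a ⟨i, rfl⟩; exact hnM i
  have hNinf : N.Infinite := Set.infinite_range_of_injective hmono.injective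
  refine hrej N hNM hNinf ?_
  intro N' hN'sub hN'inf
  have hne : N'.Nonempty := hN'inf.nonempty
  set v := sInf N' with hv
  have hvN' : v ∈ N' := Nat.sInf_mem hne
  obtain ⟨i, hi⟩ := hN'sub hvN'
  set T : Set ℕ := {a ∈ N' | v < a} with hT
  have hTinf : T.Infinite := tail_infinite hN'inf v
  have hTA : T ⊆ AA i := by
    rintro a ⟨haN', hva⟩
    obtain ⟨j, rfl⟩ := hN'sub haN'
    have : i < j := by
      rw [← hi] at hva
      exact hmono.lt_iff_lt.mp hva
    exact hmem' this
  obtain ⟨t, hpref, hbad⟩ := hacc i T hTA hTinf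
  refine ⟨v :: t, ?_, ?_⟩
  · constructor
    · rw [List.isChain_cons]
      refine ⟨?_, hpref.1⟩
      intro y hy
      have : y ∈ t := List.mem_of_mem_head? hy
      exact (hpref.2.1 y this).2
    constructor
    · intro a ha
      rcases List.mem_cons.mp ha with rfl | ha
      · exact hvN'
      · exact (hpref.2.1 a ha).1
    · intro a haN' b hb hab
      rcases List.mem_cons.mp hb with rfl | hb
      · have : v ≤ a := Nat.sInf_le haN'
        have : a = v := le_antisymm hab this
        simp [this]
      · rcases eq_or_lt_of_le (Nat.sInf_le haN' : v ≤ a) with h | h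
        · simp [← h, hv]
        · exact List.mem_cons_of_mem _ (hpref.2.2 a ⟨haN', h⟩ b hb hab)
  · have : s ++ (v :: t) = (s ++ [nn i]) ++ t := by simp [hi]
    rw [this]
    exact hbad


/-- Diagonal version: if `M` rejects `s`, there is an infinite `N ⊆ M` such that for every
`n ∈ N`, the tail of `N` beyond `n` rejects `s ++ [n]`. -/
lemma exists_diag {s : List ℕ} {M : Set ℕ} (hM : M.Infinite) (hrej : Rejects bad s M) :
    ∃ N ⊆ M, N.Infinite ∧ ∀ n ∈ N, Rejects bad (s ++ [n]) {a ∈ N | n < a} := by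
  -- state: (n, M') with M' ⊆ M infinite, elements > n, rejects (s++[n]) M', n ∈ M
  let St := {p : ℕ × Set ℕ // p.1 ∈ M ∧ p.2 ⊆ M ∧ p.2.Infinite ∧
    (∀ a ∈ p.2, p.1 < a) ∧ Rejects bad (s ++ [p.1]) p.2}
  have step : ∀ p : St, ∃ q : St, q.1.1 ∈ p.1.2 ∧ q.1.2 ⊆ p.1.2 := by
    rintro ⟨⟨n, A⟩, hnM, hAM, hAinf, hAgt, hArej⟩
    obtain ⟨n', hn'M, _, M', hM'A, hM'inf, hM'gt, hM'rej⟩ :=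
      exists_step (bad := bad) hAinf (hrej.mono hAM) n
    exact ⟨⟨⟨n', M'⟩, hAM hn'M, fun a ha => hAM (hM'A ha), hM'inf, hM'gt, hM'rej⟩,
      hn'M, hM'A⟩
  obtain ⟨n₀, hn₀M, _, M₀', hM₀A, hM₀inf, hM₀gt, hM₀rej⟩ :=
    exists_step (bad := bad) hM hrej 0
  have init : St := ⟨⟨n₀, M₀'⟩, hn₀M, hM₀A, hM₀inf, hM₀gt, hM₀rej⟩
  obtain ⟨F, hF0, hFstep⟩ := exists_seq init step
  set nn : ℕ → ℕ := fun i => (F i).1.1 with hnn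
  set AA : ℕ → Set ℕ := fun i => (F i).1.2 with hAA
  have hmem : ∀ i, nn (i + 1) ∈ AA i := fun i => (hFstep i).1
  have hsub : ∀ i, AA (i + 1) ⊆ AA i := fun i => (hFstep i).2
  have hgt : ∀ i, ∀ a ∈ AA i, nn i < a := fun i => (F i).2.2.2.2.1
  have hrejI : ∀ i, Rejects bad (s ++ [nn i]) (AA i) := fun i => (F i).2.2.2.2.2
  have hnM : ∀ i, nn i ∈ M := fun i => (F i).2.1
  have hAAmono : ∀ {i j}, i ≤ j → AA j ⊆ AA i := by
    intro i j hij
    induction j, hij using Nat.le_induction with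
    | base => exact fun _ h => h
    | succ j hij ih => exact fun a ha => ih (hsub j ha)
  have hmono : StrictMono nn := strictMono_nat_of_lt_succ fun i => hgt i _ (hmem i)
  have hmem' : ∀ {i j}, i < j → nn j ∈ AA i := by
    intro i j hij
    obtain ⟨j', rfl⟩ : ∃ j', j = j' + 1 := ⟨j - 1, by omega⟩
    exact hAAmono (by omega) (hmem j')
  refine ⟨Set.range nn, by rintro a ⟨i, rfl⟩; exact hnM i,
    Set.infinite_range_of_injective hmono.injective, ?_⟩
  rintro n ⟨i, rfl⟩
  refine (hrejI i).mono ?_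
  rintro a ⟨⟨j, rfl⟩, hlt⟩
  exact hmem' (hmono.lt_iff_lt.mp hlt)

/-- Iterated version over a finite list of stems. -/
lemma multi_step (L : List (List ℕ)) {M : Set ℕ} (hM : M.Infinite)
    (h : ∀ s ∈ L, Rejects bad s M) :
    ∃ N ⊆ M, N.Infinite ∧ ∀ s ∈ L, ∀ n ∈ N, Rejects bad (s ++ [n]) {a ∈ N | n < a} := by
  induction L generalizing M with
  | nil => exact ⟨M, fun _ h => h, hM, by simp⟩
  | cons s L ih =>
    obtain ⟨N₁, hN₁M, hN₁inf, hN₁⟩ := ih hM (fun s' hs' => h s' (List.mem_cons_of_mem _ hs'))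
    obtain ⟨N₂, hN₂N₁, hN₂inf, hN₂⟩ :=
      exists_diag (bad := bad) hN₁inf ((h s (List.mem_cons_self)).mono hN₁M)
    refine ⟨N₂, hN₂N₁.trans hN₁M, hN₂inf, ?_⟩
    intro s' hs' n hn
    rcases List.mem_cons.mp hs' with rfl | hs'
    · exact hN₂ n hn
    · exact (hN₁ s' hs' n (hN₂N₁ hn)).mono (fun a ha => ⟨hN₂N₁ ha.1, ha.2⟩)


lemma sublist_of_chain_subset : ∀ (t s : List ℕ), s.IsChain (· < ·) → t.IsChain (· < ·) →
    (∀ a ∈ s, a ∈ t) → s.Sublist t := by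
  intro t
  induction t with
  | nil =>
    intro s _ _ hsub
    cases s with
    | nil => simp
    | cons a s => exact absurd (hsub a (List.mem_cons_self)) (by simp)
  | cons b t ih =>
    intro s hs ht hsub
    cases s with
    | nil => simp
    | cons a s =>
      rw [List.isChain_cons] at hs ht
      by_cases hab : a = b
      · subst hab
        refine List.Sublist.cons₂ a ?_
        refine ih s hs.2 ht.2 ?_
        intro x hx
        have hx' : x ∈ a :: t := hsub x (List.mem_cons_of_mem _ hx)
        rcases List.mem_cons.mp hx' with rfl | hx'
        · -- x = a ∈ s contradicts chain' (a :: s)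
          exfalso
          have hp := List.isChain_iff_pairwise.mp (List.isChain_cons.mpr hs)
          exact lt_irrefl x ((List.pairwise_cons.mp hp).1 x hx)
        · exact hx'
      · refine List.Sublist.cons b ?_
        refine ih (a :: s) (List.isChain_cons.mpr hs) ht.2 ?_
        intro x hx
        have hx' : x ∈ b :: t := hsub x hx
        rcases List.mem_cons.mp hx' with rfl | hx'
        · -- x = b : then since b ∈ a :: s and all elements of a::s are ≥ a...
          exfalso
          rcases List.mem_cons.mp hx with h1 | h1
          · exact hab h1.symm
          · -- b ∈ s, so a < b; but also a ∈ b :: t with a ≠ b so a ∈ t, so b < a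
            have hab' : a < x := by
              have hp := List.isChain_iff_pairwise.mp (List.isChain_cons.mpr hs)
              exact (List.pairwise_cons.mp hp).1 x h1
            have haT : a ∈ t := by
              rcases List.mem_cons.mp (hsub a (List.mem_cons_self)) with h2 | h2
              · exact absurd h2 hab
              · exact h2
            have : x < a := by
              have hp := List.isChain_iff_pairwise.mp (List.isChain_cons.mpr ht)
              exact (List.pairwise_cons.mp hp).1 a haT
            omega
        · exact hx'

theorem nash_williams (bad : List ℕ → Prop) (M₀ : Set ℕ) (h₀ : M₀.Infinite) :
    (∃ M ⊆ M₀, M.Infinite ∧ Accepts bad [] M) ∨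
    (∃ M ⊆ M₀, M.Infinite ∧ ∀ s : List ℕ, s.IsChain (· < ·) → (∀ a ∈ s, a ∈ M) → ¬ bad s) := by
  by_cases hacc : ∃ N ⊆ M₀, N.Infinite ∧ Accepts bad [] N
  · exact Or.inl hacc
  · right
    have hrej : Rejects bad [] M₀ := by
      intro N hN hNinf hNacc
      exact hacc ⟨N, hN, hNinf, hNacc⟩
    -- fusion
    let St := {p : List ℕ × Set ℕ // p.1.IsChain (· < ·) ∧ (∀ a ∈ p.1, a ∈ M₀) ∧
      p.2 ⊆ M₀ ∧ p.2.Infinite ∧ (∀ a ∈ p.1, ∀ b ∈ p.2, a < b) ∧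
      (∀ s, s.Sublist p.1 → Rejects bad s p.2)}
    have step : ∀ p : St, ∃ q : St, (∃ n ∈ p.1.2, q.1.1 = p.1.1 ++ [n]) ∧ q.1.2 ⊆ p.1.2 := by
      rintro ⟨⟨l, M⟩, hchain, hlM₀, hMM₀, hMinf, hlt, hrejs⟩
      obtain ⟨N, hNM, hNinf, hN⟩ := multi_step (bad := bad) l.sublists hMinf
        (fun s hs => hrejs s (List.mem_sublists.mp hs))
      obtain ⟨n', hn'N, _⟩ := hNinf.exists_gt 0
      refine ⟨⟨⟨l ++ [n'], {a ∈ N | n' < a}⟩, ?_, ?_, ?_, ?_, ?_, ?_⟩, ⟨n', hNM hn'N, rfl⟩,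
        fun a ha => hNM ha.1⟩
      · rw [List.isChain_append]
        exact ⟨hchain, List.isChain_singleton n', by
          intro x hx y hy
          simp only [List.head?_cons, Option.mem_def, Option.some.injEq] at hy
          subst hy
          exact hlt x (List.mem_of_mem_getLast? hx) n' (hNM hn'N)⟩
      · intro a ha
        rcases List.mem_append.mp ha with ha | ha
        · exact hlM₀ a ha
        · rw [List.mem_singleton] at ha
          subst ha
          exact hMM₀ (hNM hn'N)
      · exact fun a ha => hMM₀ (hNM ha.1)
      · exact tail_infinite hNinf n'
      · intro a ha b hb
        rcases List.mem_append.mp ha with ha | ha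
        · exact lt_trans (hlt a ha n' (hNM hn'N)) hb.2
        · rw [List.mem_singleton] at ha
          subst ha
          exact hb.2
      · intro s hs
        rw [List.sublist_append_iff] at hs
        obtain ⟨s₁, s₂, rfl, hs₁, hs₂⟩ := hs
        rcases List.sublist_singleton.mp hs₂ with rfl | rfl
        · rw [List.append_nil]
          exact ((hrejs s₁ hs₁).mono hNM).mono (fun a ha => ha.1)
        · exact hN s₁ (List.mem_sublists.mpr hs₁) n' hn'N
    have init : St := ⟨⟨[], M₀⟩, List.isChain_nil, by simp, fun _ h => h, h₀, by simp, by
      intro s hs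
      rw [List.sublist_nil] at hs
      subst hs
      exact hrej⟩
    obtain ⟨F, hF0, hFstep⟩ := exists_seq init step
    set ll : ℕ → List ℕ := fun k => (F k).1.1 with hll
    set MM : ℕ → Set ℕ := fun k => (F k).1.2 with hMM
    -- the union of all the lists
    set Minf : Set ℕ := {a | ∃ k, a ∈ ll k} with hMinf
    have hllmono : ∀ k, ∃ n ∈ MM k, ll (k+1) = ll k ++ [n] := fun k => (hFstep k).1
    have hpref : ∀ {j k}, j ≤ k → ∀ a ∈ ll j, a ∈ ll k := by
      intro j k hjk
      induction k, hjk using Nat.le_induction with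
      | base => exact fun a h => h
      | succ k hjk ih =>
        intro a ha
        obtain ⟨n, _, h2⟩ := hllmono k
        rw [h2]
        exact List.mem_append.mpr (Or.inl (ih a ha))
    have hchain : ∀ k, (ll k).IsChain (· < ·) := fun k => (F k).2.1
    have hrejs : ∀ k s, s.Sublist (ll k) → Rejects bad s (MM k) := fun k => (F k).2.2.2.2.2.2
    have hMinfM₀ : Minf ⊆ M₀ := by
      rintro a ⟨k, hk⟩
      exact (F k).2.2.1 a hk
    have hMinfinf : Minf.Infinite := by
      choose nadd hnaddM hnadd using hllmono
      have hnmono : StrictMono nadd := by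
        apply strictMono_nat_of_lt_succ
        intro k
        have h1 : nadd k ∈ ll (k + 1) := by
          rw [hnadd k]
          simp
        exact (F (k+1)).2.2.2.2.2.1 (nadd k) h1 (nadd (k+1)) (hnaddM (k+1))
      refine Set.infinite_of_injective_forall_mem (f := nadd) hnmono.injective ?_
      intro k
      refine ⟨k + 1, ?_⟩
      rw [hnadd k]
      simp
    refine ⟨Minf, hMinfM₀, hMinfinf, ?_⟩
    intro s hschain hsmem hbad
    have hK : ∃ K, ∀ a ∈ s, a ∈ ll K := by
      clear hbad hschain
      induction s with
      | nil => exact ⟨0, by simp⟩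
      | cons a s ih =>
        obtain ⟨K, hKs⟩ := ih (fun x hx => hsmem x (List.mem_cons_of_mem _ hx))
        obtain ⟨k, hk⟩ := hsmem a (List.mem_cons_self)
        refine ⟨max k K, ?_⟩
        intro x hx
        rcases List.mem_cons.mp hx with rfl | hx
        · exact hpref (le_max_left _ _) x hk
        · exact hpref (le_max_right _ _) x (hKs x hx)
    obtain ⟨K, hKs⟩ := hK
    have hsl : s.Sublist (ll K) := sublist_of_chain_subset (ll K) s hschain (hchain K) hKs
    exact hrejs K s hsl (MM K) (fun _ h => h) (F K).2.2.2.2.1 (accepts_of_bad hbad _)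


lemma pref_get {e : ℕ → ℕ} (he : StrictMono e) {t : List ℕ} (ht : Pref t (Set.range e)) :
    ∀ i (h : i < t.length), t.get ⟨i, h⟩ = e i := by
  have hget : ∀ i j : Fin t.length, i < j → t.get i < t.get j := by
    intro i j hij
    exact List.pairwise_iff_get.mp (List.isChain_iff_pairwise.mp ht.1) i j hij
  intro i
  induction i using Nat.strong_induction_on with
  | _ i IH =>
    intro h
    obtain ⟨m, hm⟩ := ht.2.1 _ (t.get_mem ⟨i, h⟩)
    rcases lt_trichotomy m i with hmi | rfl | him
    · exfalso
      have h1 : t.get ⟨m, lt_trans hmi h⟩ = e m := IH m hmi _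
      have h2 : t.get ⟨m, lt_trans hmi h⟩ < t.get ⟨i, h⟩ := hget _ _ (by exact hmi)
      rw [h1, hm] at h2
      exact lt_irrefl _ h2
    · exact hm.symm
    · exfalso
      have h1 : e i < t.get ⟨i, h⟩ := by
        rw [← hm]
        exact he him
      have h2 : e i ∈ t := ht.2.2 (e i) ⟨i, rfl⟩ _ (t.get_mem ⟨i, h⟩) (le_of_lt h1)
      obtain ⟨j, hj⟩ := List.mem_iff_get.mp h2
      rcases lt_trichotomy (j : ℕ) i with hji | hji | hji
      · have := IH j hji j.2
        rw [Fin.eta] at this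
        rw [this] at hj
        exact absurd (he.injective hj) (by omega)
      · have : j = (⟨i, h⟩ : Fin t.length) := Fin.ext hji
        rw [this] at hj
        rw [hj] at h1
        exact lt_irrefl _ h1
      · have := hget ⟨i, h⟩ j (by exact hji)
        rw [hj] at this
        exact absurd (lt_trans h1 this) (lt_irrefl _)


section Rosenthal

variable {S : Type*} (A B : ℕ → Set S)

/-- the alternating badness predicate -/
def altBad (l : List ℕ) : Prop :=
  ¬ ∃ g : S, ∀ i : Fin l.length, g ∈ (if (i : ℕ) % 2 = 0 then A else B) (l.get i)

/-- the list realizing a pattern (P, Q), with padding -/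
def buildL (u : ℕ → ℕ) (P Q : Finset ℕ) : ℕ → List ℕ
  | 0 => []
  | k+1 => buildL u P Q k ++
      (if k ∈ P then
        (if (buildL u P Q k).length % 2 = 0 then [u (3*k+2)] else [u (3*k), u (3*k+2)])
       else if k ∈ Q then
        (if (buildL u P Q k).length % 2 = 1 then [u (3*k+2)] else [u (3*k), u (3*k+2)])
       else [])

lemma buildL_spec {u : ℕ → ℕ} (hu : StrictMono u) (P Q : Finset ℕ) (hPQ : Disjoint P Q) :
    ∀ k, (∀ a ∈ buildL u P Q k, ∃ j, j < 3*k ∧ a = u j) ∧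
      (buildL u P Q k).IsChain (· < ·) ∧
      (∀ k' < k, k' ∈ P → ∃ l₁ l₂, buildL u P Q k = l₁ ++ u (3*k'+2) :: l₂ ∧
        l₁.length % 2 = 0) ∧
      (∀ k' < k, k' ∈ Q → ∃ l₁ l₂, buildL u P Q k = l₁ ++ u (3*k'+2) :: l₂ ∧
        l₁.length % 2 = 1) := by
  intro k
  induction k with
  | zero =>
    refine ⟨by simp [buildL], by simp [buildL], ?_, ?_⟩ <;>
      · intro k' hk'
        exact absurd hk' (Nat.not_lt_zero k')
  | succ k ih =>
    obtain ⟨ih1, ih2, ih3, ih4⟩ := ih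
    set l := buildL u P Q k with hl
    -- the appended block
    set blk : List ℕ := (if k ∈ P then
        (if l.length % 2 = 0 then [u (3*k+2)] else [u (3*k), u (3*k+2)])
       else if k ∈ Q then
        (if l.length % 2 = 1 then [u (3*k+2)] else [u (3*k), u (3*k+2)])
       else []) with hblk
    have hbuild : buildL u P Q (k+1) = l ++ blk := rfl
    have hblk_mem : ∀ a ∈ blk, (a = u (3*k) ∨ a = u (3*k+2)) := by
      intro a ha
      rw [hblk] at ha
      split_ifs at ha <;> simp_all <;> tauto
    have hblk_chain : blk.IsChain (· < ·) := by
      rw [hblk]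
      have h32 : u (3*k) < u (3*k+2) := hu (by omega)
      split_ifs <;> simp [List.isChain_cons_cons, h32]
    have h1 : ∀ a ∈ buildL u P Q (k+1), ∃ j, j < 3*(k+1) ∧ a = u j := by
      rw [hbuild]
      intro a ha
      rcases List.mem_append.mp ha with ha | ha
      · obtain ⟨j, hj1, hj2⟩ := ih1 a ha
        exact ⟨j, by omega, hj2⟩
      · rcases hblk_mem a ha with rfl | rfl
        · exact ⟨3*k, by omega, rfl⟩
        · exact ⟨3*k+2, by omega, rfl⟩
    refine ⟨h1, ?_, ?_, ?_⟩
    · rw [hbuild, List.isChain_append]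
      refine ⟨ih2, hblk_chain, ?_⟩
      intro x hx y hy
      obtain ⟨j, hj1, hj2⟩ := ih1 x (List.mem_of_mem_getLast? hx)
      have hy' : y ∈ blk := List.mem_of_mem_head? hy
      rcases hblk_mem y hy' with rfl | rfl
      · rw [hj2]; exact hu (by omega)
      · rw [hj2]; exact hu (by omega)
    · intro k' hk' hk'P
      rcases Nat.lt_succ_iff_lt_or_eq.mp hk' with hk' | rfl
      · obtain ⟨l₁, l₂, heq, hpar⟩ := ih3 k' hk' hk'P
        exact ⟨l₁, l₂ ++ blk, by rw [hbuild, heq]; simp, hpar⟩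
      · -- k' = k ∈ P
        have hkP : k' ∈ P := hk'P
        rw [hbuild, hblk, if_pos hkP]
        by_cases hpar : l.length % 2 = 0
        · rw [if_pos hpar]
          exact ⟨l, [], rfl, hpar⟩
        · rw [if_neg hpar]
          refine ⟨l ++ [u (3*k')], [], by simp, ?_⟩
          rw [List.length_append]
          simp only [List.length_singleton]
          omega
    · intro k' hk' hk'Q
      rcases Nat.lt_succ_iff_lt_or_eq.mp hk' with hk' | rfl
      · obtain ⟨l₁, l₂, heq, hpar⟩ := ih4 k' hk' hk'Q
        exact ⟨l₁, l₂ ++ blk, by rw [hbuild, heq]; simp, hpar⟩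
      · have hkQ : k' ∈ Q := hk'Q
        have hkP : k' ∉ P := fun h => (hPQ.forall_ne_finset h hkQ) rfl
        rw [hbuild, hblk, if_neg hkP, if_pos hkQ]
        by_cases hpar : l.length % 2 = 1
        · rw [if_pos hpar]
          exact ⟨l, [], rfl, hpar⟩
        · rw [if_neg hpar]
          refine ⟨l ++ [u (3*k')], [], by simp, ?_⟩
          rw [List.length_append]
          simp only [List.length_singleton]
          omega

theorem rosenthal_pairs (M₀ : Set ℕ) (h₀ : M₀.Infinite) :
    (∃ M ⊆ M₀, M.Infinite ∧ ∀ g : S,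
        ¬({n ∈ M | g ∈ A n}.Infinite ∧ {n ∈ M | g ∈ B n}.Infinite)) ∨
    (∃ m : ℕ → ℕ, StrictMono m ∧ (∀ k, m k ∈ M₀) ∧ ∀ P Q : Finset ℕ, Disjoint P Q →
      ∃ g : S, (∀ k ∈ P, g ∈ A (m k)) ∧ (∀ k ∈ Q, g ∈ B (m k))) := by
  rcases nash_williams (altBad A B) M₀ h₀ with ⟨M, hMM₀, hMinf, hMacc⟩ | ⟨M, hMM₀, hMinf, hMgood⟩
  · left
    refine ⟨M, hMM₀, hMinf, ?_⟩
    rintro g ⟨hI, hJ⟩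
    set C : ℕ → Set ℕ := fun i =>
      if i % 2 = 0 then {n ∈ M | g ∈ A n} else {n ∈ M | g ∈ B n} with hC
    have hCeval : ∀ i, C i = if i % 2 = 0 then {n ∈ M | g ∈ A n} else {n ∈ M | g ∈ B n} :=
      fun i => rfl
    have hCinf : ∀ i, (C i).Infinite := by
      intro i
      rw [hCeval]
      split_ifs <;> assumption
    let St := {p : ℕ × ℕ // p.2 ∈ C p.1}
    have step : ∀ p : St, ∃ q : St, q.1.1 = p.1.1 + 1 ∧ p.1.2 < q.1.2 := by
      rintro ⟨⟨i, v⟩, hv⟩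
      obtain ⟨v', hv', hvv'⟩ := (hCinf (i+1)).exists_gt v
      exact ⟨⟨⟨i+1, v'⟩, hv'⟩, rfl, hvv'⟩
    obtain ⟨v₀, hv₀⟩ := (hCinf 0).nonempty
    obtain ⟨F, hF0, hFstep⟩ := exists_seq (⟨⟨0, v₀⟩, hv₀⟩ : St) step
    have hidx : ∀ k, (F k).1.1 = k := by
      intro k
      induction k with
      | zero => rw [hF0]
      | succ k ih => rw [(hFstep k).1, ih]
    set e : ℕ → ℕ := fun k => (F k).1.2 with he
    have hemono : StrictMono e := strictMono_nat_of_lt_succ fun k => (hFstep k).2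
    have heC : ∀ k, e k ∈ C k := by
      intro k
      have := (F k).2
      rwa [hidx k] at this
    have heM : ∀ k, e k ∈ M := by
      intro k
      have := heC k
      rw [hCeval] at this
      split_ifs at this <;> exact this.1
    obtain ⟨t, hpref, hbad⟩ := hMacc (Set.range e)
      (by rintro a ⟨i, rfl⟩; exact heM i)
      (Set.infinite_range_of_injective hemono.injective)
    rw [List.nil_append] at hbad
    refine hbad ⟨g, ?_⟩
    intro i
    have hget : t.get i = e (i : ℕ) := by
      have := pref_get hemono hpref (i : ℕ) i.2
      rwa [Fin.eta] at this
    rw [hget]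
    have := heC (i : ℕ)
    rw [hCeval] at this
    by_cases hpar : (i : ℕ) % 2 = 0
    · rw [if_pos hpar]
      rw [if_pos hpar] at this
      exact this.2
    · rw [if_neg hpar]
      rw [if_neg hpar] at this
      exact this.2
  · right
    set u : ℕ → ℕ := fun i => Nat.nth (· ∈ M) i with hu
    have hMinf' : (setOf (· ∈ M)).Infinite := hMinf
    have humono : StrictMono u := fun i j hij => (Nat.nth_lt_nth hMinf').mpr hij
    have huM : ∀ i, u i ∈ M := fun i => Nat.nth_mem_of_infinite hMinf' i
    refine ⟨fun k => u (3*k+2), fun i j hij => humono (by omega), fun k => hMM₀ (huM _), ?_⟩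
    intro P Q hPQ
    obtain ⟨K, hK⟩ : ∃ K, ∀ k ∈ P ∪ Q, k < K := by
      rcases (P ∪ Q).eq_empty_or_nonempty with h | h
      · exact ⟨1, by simp [h]⟩
      · exact ⟨((P ∪ Q).max' h) + 1, fun k hk => Nat.lt_succ_of_le (Finset.le_max' _ _ hk)⟩
    obtain ⟨hb1, hb2, hb3, hb4⟩ := buildL_spec humono P Q hPQ K
    set l := buildL u P Q K with hl
    have hgood : ¬ altBad A B l := by
      apply hMgood l hb2
      intro a ha
      obtain ⟨j, _, rfl⟩ := hb1 a ha
      exact huM j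
    rw [altBad, not_not] at hgood
    obtain ⟨g, hg⟩ := hgood
    refine ⟨g, ?_, ?_⟩
    · intro k hk
      obtain ⟨l₁, l₂, heq, hpar⟩ := hb3 k (hK k (Finset.mem_union_left _ hk)) hk
      have hlen : l₁.length < l.length := by
        rw [heq, List.length_append]
        simp
      have hgeti : l.get ⟨l₁.length, hlen⟩ = u (3*k+2) := by
        simp only [List.get_eq_getElem]
        rw [List.getElem_of_eq heq]
        rw [List.getElem_append_right (le_refl l₁.length)]
        simp
      have := hg ⟨l₁.length, hlen⟩
      rw [hgeti] at this
      simpa [hpar] using this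
    · intro k hk
      obtain ⟨l₁, l₂, heq, hpar⟩ := hb4 k (hK k (Finset.mem_union_right _ hk)) hk
      have hlen : l₁.length < l.length := by
        rw [heq, List.length_append]
        simp
      have hgeti : l.get ⟨l₁.length, hlen⟩ = u (3*k+2) := by
        simp only [List.get_eq_getElem]
        rw [List.getElem_of_eq heq]
        rw [List.getElem_append_right (le_refl l₁.length)]
        simp
      have := hg ⟨l₁.length, hlen⟩
      rw [hgeti] at this
      have hpar' : ¬ (l₁.length % 2 = 0) := by omega
      simpa [hpar'] using this

end Rosenthal

end NWc


namespace NWc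

variable {Y : Type*} [NormedAddCommGroup Y] [NormedSpace ℝ Y] [CompleteSpace Y]

/-- The norm on `lp _ 1` is the sum of absolute values. -/
lemma lp_one_norm (a : lp (fun _ : ℕ => ℝ) 1) : ‖a‖ = ∑' k, ‖a k‖ := by
  rw [lp.norm_eq_tsum_rpow (by norm_num) a]
  simp [ENNReal.toReal_one]

lemma lp_one_summable (a : lp (fun _ : ℕ => ℝ) 1) : Summable (fun k => ‖a k‖) := by
  have := (lp.memℓp a).summable (p := 1) (by norm_num)
  simpa [ENNReal.toReal_one] using this

/-- From an "independent" system we construct an embedding of ℓ₁. -/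
lemma ell_one_embedding (x : ℕ → Y) (hx : ∀ n, ‖x n‖ ≤ 1) (m : ℕ → ℕ) (p q : ℝ) (hpq : p < q)
    (hind : ∀ P Q : Finset ℕ, Disjoint P Q → ∃ g : Y →L[ℝ] ℝ, ‖g‖ ≤ 1 ∧
      (∀ k ∈ P, g (x (m k)) < p) ∧ (∀ k ∈ Q, q < g (x (m k)))) :
    ∃ T : lp (fun _ : ℕ => ℝ) 1 →L[ℝ] Y, ∃ c > (0 : ℝ), ∀ v, c * ‖v‖ ≤ ‖T v‖ := by
  classical
  set y : ℕ → Y := fun k => x (m k) with hy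
  have hyn : ∀ k, ‖y k‖ ≤ 1 := fun k => hx (m k)
  -- finite-dimensional lower estimate
  have hfin : ∀ (a : ℕ → ℝ) (F : Finset ℕ),
      (q - p) * ∑ k ∈ F, |a k| ≤ 2 * ‖∑ k ∈ F, a k • y k‖ := by
    intro a F
    set P : Finset ℕ := F.filter (fun k => 0 ≤ a k) with hP
    set Q : Finset ℕ := F.filter (fun k => ¬ 0 ≤ a k) with hQ
    have hdisj : Disjoint P Q := Finset.disjoint_filter_filter_not F F _
    obtain ⟨g₁, hg₁n, hg₁Q, hg₁P⟩ := hind Q P hdisj.symm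
    obtain ⟨g₂, hg₂n, hg₂P, hg₂Q⟩ := hind P Q hdisj
    set Sv : Y := ∑ k ∈ F, a k • y k with hSv
    have hmap : ∀ g : Y →L[ℝ] ℝ, g Sv = ∑ k ∈ F, a k * g (y k) := by
      intro g
      rw [hSv, map_sum]
      exact Finset.sum_congr rfl fun k _ => by rw [g.map_smul, smul_eq_mul]
    have hsplit : ∀ b : ℕ → ℝ, ∑ k ∈ F, b k = ∑ k ∈ P, b k + ∑ k ∈ Q, b k := by
      intro b
      rw [hP, hQ, Finset.sum_filter_add_sum_filter_not]
    have hPpos : ∀ k ∈ P, 0 ≤ a k := fun k hk => (Finset.mem_filter.mp hk).2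
    have hQneg : ∀ k ∈ Q, a k ≤ 0 := fun k hk =>
      le_of_lt (not_le.mp (Finset.mem_filter.mp hk).2)
    have h1 : q * ∑ k ∈ P, a k + p * ∑ k ∈ Q, a k ≤ g₁ Sv := by
      rw [hmap g₁, hsplit (fun k => a k * g₁ (y k)), Finset.mul_sum, Finset.mul_sum]
      apply add_le_add
      · apply Finset.sum_le_sum
        intro k hk
        calc q * a k = a k * q := mul_comm _ _
          _ ≤ a k * g₁ (y k) := mul_le_mul_of_nonneg_left (le_of_lt (hg₁P k hk)) (hPpos k hk)
      · apply Finset.sum_le_sum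
        intro k hk
        calc p * a k = a k * p := mul_comm _ _
          _ ≤ a k * g₁ (y k) := mul_le_mul_of_nonpos_left (le_of_lt (hg₁Q k hk)) (hQneg k hk)
    have h2 : g₂ Sv ≤ p * ∑ k ∈ P, a k + q * ∑ k ∈ Q, a k := by
      rw [hmap g₂, hsplit (fun k => a k * g₂ (y k)), Finset.mul_sum, Finset.mul_sum]
      apply add_le_add
      · apply Finset.sum_le_sum
        intro k hk
        calc a k * g₂ (y k) ≤ a k * p :=
              mul_le_mul_of_nonneg_left (le_of_lt (hg₂P k hk)) (hPpos k hk)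
          _ = p * a k := mul_comm _ _
      · apply Finset.sum_le_sum
        intro k hk
        calc a k * g₂ (y k) ≤ a k * q :=
              mul_le_mul_of_nonpos_left (le_of_lt (hg₂Q k hk)) (hQneg k hk)
          _ = q * a k := mul_comm _ _
    have habs : ∑ k ∈ F, |a k| = ∑ k ∈ P, a k - ∑ k ∈ Q, a k := by
      rw [hsplit (fun k => |a k|)]
      have e1 : ∑ k ∈ P, |a k| = ∑ k ∈ P, a k :=
        Finset.sum_congr rfl fun k hk => abs_of_nonneg (hPpos k hk)
      have e2 : ∑ k ∈ Q, |a k| = ∑ k ∈ Q, (- a k) :=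
        Finset.sum_congr rfl fun k hk => abs_of_nonpos (hQneg k hk)
      rw [e1, e2, Finset.sum_neg_distrib]
      ring
    have hb1 : |g₁ Sv| ≤ ‖Sv‖ := by
      calc |g₁ Sv| = ‖g₁ Sv‖ := (Real.norm_eq_abs _).symm
        _ ≤ ‖g₁‖ * ‖Sv‖ := g₁.le_opNorm Sv
        _ ≤ 1 * ‖Sv‖ := by
            apply mul_le_mul_of_nonneg_right hg₁n (norm_nonneg _)
        _ = ‖Sv‖ := one_mul _
    have hb2 : |g₂ Sv| ≤ ‖Sv‖ := by
      calc |g₂ Sv| = ‖g₂ Sv‖ := (Real.norm_eq_abs _).symm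
        _ ≤ ‖g₂‖ * ‖Sv‖ := g₂.le_opNorm Sv
        _ ≤ 1 * ‖Sv‖ := by
            apply mul_le_mul_of_nonneg_right hg₂n (norm_nonneg _)
        _ = ‖Sv‖ := one_mul _
    have habs1 := abs_le.mp hb1
    have habs2 := abs_le.mp hb2
    nlinarith [h1, h2, habs]
  -- the linear map
  have hsum : ∀ a : lp (fun _ : ℕ => ℝ) 1, Summable (fun k => a k • y k) := by
    intro a
    apply Summable.of_norm_bounded (lp_one_summable a)
    intro k
    rw [norm_smul]
    calc ‖a k‖ * ‖y k‖ ≤ ‖a k‖ * 1 :=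
          mul_le_mul_of_nonneg_left (hyn k) (norm_nonneg _)
      _ = ‖a k‖ := mul_one _
  set Tlin : lp (fun _ : ℕ => ℝ) 1 →ₗ[ℝ] Y :=
    { toFun := fun a => ∑' k, a k • y k
      map_add' := by
        intro a b
        rw [← Summable.tsum_add (hsum a) (hsum b)]
        apply tsum_congr
        intro k
        have : (↑(a + b) : ∀ _ : ℕ, ℝ) k = a k + b k := by
          rw [lp.coeFn_add]
          rfl
        rw [this, add_smul]
      map_smul' := by
        intro c a
        rw [RingHom.id_apply, ← tsum_const_smul'' c]
        apply tsum_congr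
        intro k
        have : (↑(c • a) : ∀ _ : ℕ, ℝ) k = c * a k := by
          rw [lp.coeFn_smul]
          rfl
        rw [this, mul_smul] } with hTlin
  have hTbound : ∀ a, ‖Tlin a‖ ≤ 1 * ‖a‖ := by
    intro a
    rw [one_mul, lp_one_norm]
    have h1 : ‖Tlin a‖ ≤ ∑' k, ‖a k • y k‖ := by
      apply norm_tsum_le_tsum_norm
      apply Summable.of_nonneg_of_le (fun k => norm_nonneg _) _ (lp_one_summable a)
      intro k
      rw [norm_smul]
      calc ‖a k‖ * ‖y k‖ ≤ ‖a k‖ * 1 :=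
            mul_le_mul_of_nonneg_left (hyn k) (norm_nonneg _)
        _ = ‖a k‖ := mul_one _
    refine h1.trans ?_
    apply Summable.tsum_le_tsum _ _ (lp_one_summable a)
    · intro k
      rw [norm_smul]
      calc ‖a k‖ * ‖y k‖ ≤ ‖a k‖ * 1 :=
            mul_le_mul_of_nonneg_left (hyn k) (norm_nonneg _)
        _ = ‖a k‖ := mul_one _
    · apply Summable.of_nonneg_of_le (fun k => norm_nonneg _) _ (lp_one_summable a)
      intro k
      rw [norm_smul]
      calc ‖a k‖ * ‖y k‖ ≤ ‖a k‖ * 1 :=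
            mul_le_mul_of_nonneg_left (hyn k) (norm_nonneg _)
        _ = ‖a k‖ := mul_one _
  set T : lp (fun _ : ℕ => ℝ) 1 →L[ℝ] Y := Tlin.mkContinuous 1 hTbound with hT
  refine ⟨T, (q - p)/2, by linarith, ?_⟩
  intro a
  have hTa : T a = ∑' k, a k • y k := rfl
  -- lower bound via finite truncations
  have key : ∀ F : Finset ℕ,
      (q - p)/2 * (∑ k ∈ F, ‖a k‖) - (∑' k : ↑((↑F : Set ℕ)ᶜ), ‖a ↑k‖) ≤ ‖T a‖ := by
    intro F
    have hsplit := Summable.sum_add_tsum_compl (s := F) (hsum a)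
    have htail : ‖∑' k : ↑((↑F : Set ℕ)ᶜ), (a ↑k) • y ↑k‖ ≤ ∑' k : ↑((↑F : Set ℕ)ᶜ), ‖a ↑k‖ := by
      have hs : Summable (fun k : ↑((↑F : Set ℕ)ᶜ) => ‖a ↑k‖) :=
        (lp_one_summable a).subtype _
      refine (norm_tsum_le_tsum_norm ?_).trans (Summable.tsum_le_tsum ?_ ?_ hs)
      · apply Summable.of_nonneg_of_le (fun k => norm_nonneg _) _ hs
        intro k
        rw [norm_smul]
        calc ‖a ↑k‖ * ‖y ↑k‖ ≤ ‖a ↑k‖ * 1 :=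
              mul_le_mul_of_nonneg_left (hyn _) (norm_nonneg _)
          _ = ‖a ↑k‖ := mul_one _
      · intro k
        rw [norm_smul]
        calc ‖a ↑k‖ * ‖y ↑k‖ ≤ ‖a ↑k‖ * 1 :=
              mul_le_mul_of_nonneg_left (hyn _) (norm_nonneg _)
          _ = ‖a ↑k‖ := mul_one _
      · apply Summable.of_nonneg_of_le (fun k => norm_nonneg _) _ hs
        intro k
        rw [norm_smul]
        calc ‖a ↑k‖ * ‖y ↑k‖ ≤ ‖a ↑k‖ * 1 :=
              mul_le_mul_of_nonneg_left (hyn _) (norm_nonneg _)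
          _ = ‖a ↑k‖ := mul_one _
    have hTsplit : ‖∑ k ∈ F, a k • y k‖ - ‖∑' k : ↑((↑F : Set ℕ)ᶜ), (a ↑k) • y ↑k‖ ≤ ‖T a‖ := by
      rw [hTa, ← hsplit]
      have h := norm_sub_norm_le (∑ k ∈ F, (a k) • y k)
        (- ∑' k : ↑((↑F : Set ℕ)ᶜ), (a ↑k) • y ↑k)
      rw [norm_neg, sub_neg_eq_add] at h
      exact h
    have hlow : (q - p)/2 * (∑ k ∈ F, ‖a k‖) ≤ ‖∑ k ∈ F, a k • y k‖ := by
      have := hfin (fun k => a k) F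
      have h2 : ∑ k ∈ F, |a k| = ∑ k ∈ F, ‖a k‖ :=
        Finset.sum_congr rfl fun k _ => (Real.norm_eq_abs _).symm
      rw [h2] at this
      linarith
    linarith [hlow, hTsplit, htail]
  -- pass to the limit
  have hlim1 : Tendsto (fun F : Finset ℕ => ∑ k ∈ F, ‖a k‖) atTop (𝓝 (∑' k, ‖a k‖)) :=
    (lp_one_summable a).hasSum
  have hlim2 : Tendsto (fun F : Finset ℕ => ∑' k : ↑((↑F : Set ℕ)ᶜ), ‖a ↑k‖) atTop (𝓝 0) :=
    tendsto_tsum_compl_atTop_zero (fun k => ‖a k‖)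
  have hlim : Tendsto (fun F : Finset ℕ =>
      (q - p)/2 * (∑ k ∈ F, ‖a k‖) - (∑' k : ↑((↑F : Set ℕ)ᶜ), ‖a ↑k‖)) atTop
      (𝓝 ((q - p)/2 * (∑' k, ‖a k‖) - 0)) :=
    ((hlim1.const_mul _).sub hlim2)
  have hfinal := le_of_tendsto hlim (Filter.Eventually.of_forall key)
  rw [sub_zero] at hfinal
  rw [lp_one_norm a]
  exact hfinal


theorem weakly_cauchy_subseq
    (hX : ¬ ∃ T : lp (fun _ : ℕ => ℝ) 1 →L[ℝ] Y, ∃ c > (0 : ℝ), ∀ v, c * ‖v‖ ≤ ‖T v‖)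
    (x : ℕ → Y) (hx : ∀ n, ‖x n‖ ≤ 1) :
    ∃ φ : ℕ → ℕ, StrictMono φ ∧
      ∀ g : Y →L[ℝ] ℝ, ∃ L : ℝ, Tendsto (fun k => g (x (φ k))) atTop (𝓝 L) := by
  classical
  -- one step, for a fixed pair of reals
  have pair : ∀ (p q : ℝ), p < q → ∀ M : Set ℕ, M.Infinite → ∃ M' ⊆ M, M'.Infinite ∧
      ∀ g : Y →L[ℝ] ℝ, ¬({n | n ∈ M' ∧ ‖g‖ ≤ 1 ∧ g (x n) < p}.Infinite ∧
        {n | n ∈ M' ∧ ‖g‖ ≤ 1 ∧ q < g (x n)}.Infinite) := by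
    intro p q hpq M hM
    rcases rosenthal_pairs (S := Y →L[ℝ] ℝ)
        (fun n => {g | ‖g‖ ≤ 1 ∧ g (x n) < p})
        (fun n => {g | ‖g‖ ≤ 1 ∧ q < g (x n)}) M hM with
      ⟨M', h1, h2, h3⟩ | ⟨m, hm, hmM, hind⟩
    · exact ⟨M', h1, h2, fun g hg => h3 g hg⟩
    · exfalso
      apply hX
      apply ell_one_embedding x hx m p q hpq
      intro P Q hPQ
      obtain ⟨g, hg1, hg2⟩ := hind P Q hPQ
      rcases P.eq_empty_or_nonempty with rfl | ⟨k₀, hk₀⟩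
      · rcases Q.eq_empty_or_nonempty with rfl | ⟨k₀, hk₀⟩
        · refine ⟨0, by simp, by simp, by simp⟩
        · exact ⟨g, (hg2 k₀ hk₀).1, fun k hk => (hg1 k hk).2, fun k hk => (hg2 k hk).2⟩
      · exact ⟨g, (hg1 k₀ hk₀).1, fun k hk => (hg1 k hk).2, fun k hk => (hg2 k hk).2⟩
  -- enumerate the rational pairs
  obtain ⟨e, he⟩ := exists_surjective_nat (ℚ × ℚ)
  -- shrink recursively
  have step : ∀ (j : ℕ) (M : {M : Set ℕ // M.Infinite}),
      ∃ M' : {M : Set ℕ // M.Infinite}, M'.1 ⊆ M.1 ∧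
        (((e j).1 : ℝ) < ((e j).2 : ℝ) →
          ∀ g : Y →L[ℝ] ℝ, ¬({n | n ∈ M'.1 ∧ ‖g‖ ≤ 1 ∧ g (x n) < ((e j).1 : ℝ)}.Infinite ∧
            {n | n ∈ M'.1 ∧ ‖g‖ ≤ 1 ∧ ((e j).2 : ℝ) < g (x n)}.Infinite)) := by
    intro j M
    by_cases h : ((e j).1 : ℝ) < ((e j).2 : ℝ)
    · obtain ⟨M', hsub, hinf, hprop⟩ := pair _ _ h M.1 M.2
      exact ⟨⟨M', hinf⟩, hsub, fun _ => hprop⟩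
    · exact ⟨M, fun _ h => h, fun h' => absurd h' h⟩
  obtain ⟨MM, hMM0, hMMstep⟩ := exists_seq' (⟨Set.univ, Set.infinite_univ⟩ :
    {M : Set ℕ // M.Infinite}) step
  have hMMsub : ∀ j, (MM (j+1)).1 ⊆ (MM j).1 := fun j => (hMMstep j).1
  have hMMmono : ∀ {j k}, j ≤ k → (MM k).1 ⊆ (MM j).1 := by
    intro j k hjk
    induction k, hjk using Nat.le_induction with
    | base => exact fun _ h => h
    | succ k hjk ih => exact fun a ha => ih (hMMsub k ha)
  -- the diagonal sequence
  obtain ⟨v₀, hv₀⟩ := (MM 0).2.nonempty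
  have dstep : ∀ (k : ℕ) (v : ℕ), ∃ v' : ℕ, v' ∈ (MM (k+1)).1 ∧ v < v' := by
    intro k v
    obtain ⟨v', h1, h2⟩ := (MM (k+1)).2.exists_gt v
    exact ⟨v', h1, h2⟩
  obtain ⟨nn, hnn0, hnnstep⟩ := exists_seq' v₀ dstep
  have hnmono : StrictMono nn := strictMono_nat_of_lt_succ fun k => (hnnstep k).2
  have hnmem : ∀ k, nn k ∈ (MM k).1 := by
    intro k
    cases k with
    | zero => rw [hnn0]; exact hv₀
    | succ k => exact (hnnstep k).1
  refine ⟨nn, hnmono, ?_⟩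
  -- first, for functionals in the unit ball
  have main : ∀ g : Y →L[ℝ] ℝ, ‖g‖ ≤ 1 → ∃ L : ℝ, Tendsto (fun k => g (x (nn k))) atTop (𝓝 L) := by
    intro g hg
    set t : ℕ → ℝ := fun k => g (x (nn k)) with ht
    have hb : ∀ k, |t k| ≤ 1 := by
      intro k
      calc |t k| = ‖g (x (nn k))‖ := (Real.norm_eq_abs _).symm
        _ ≤ ‖g‖ * ‖x (nn k)‖ := g.le_opNorm _
        _ ≤ 1 * 1 := by
            apply mul_le_mul hg (hx _) (norm_nonneg _) zero_le_one
        _ = 1 := one_mul _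
    have hba : IsBoundedUnder (· ≤ ·) atTop t :=
      isBoundedUnder_of ⟨1, fun k => (abs_le.mp (hb k)).2⟩
    have hbb : IsBoundedUnder (· ≥ ·) atTop t :=
      isBoundedUnder_of ⟨-1, fun k => (abs_le.mp (hb k)).1⟩
    have heq : liminf t atTop = limsup t atTop := by
      by_contra hne
      have hlt : liminf t atTop < limsup t atTop :=
        lt_of_le_of_ne (liminf_le_limsup hba hbb) hne
      obtain ⟨p, hp1, hp2⟩ := exists_rat_btwn hlt
      obtain ⟨q, hq1, hq2⟩ := exists_rat_btwn hp2
      obtain ⟨j, hj⟩ := he (p, q)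
      have hpq : ((e j).1 : ℝ) < ((e j).2 : ℝ) := by rw [hj]; exact_mod_cast hq1
      have hprop := (hMMstep j).2 hpq g
      apply hprop
      have hfreq1 : {k | t k < (p : ℝ)}.Infinite := by
        rw [← Nat.frequently_atTop_iff_infinite]
        exact frequently_lt_of_liminf_lt hba.isCoboundedUnder_ge hp1
      have hfreq2 : {k | (q : ℝ) < t k}.Infinite := by
        rw [← Nat.frequently_atTop_iff_infinite]
        exact frequently_lt_of_lt_limsup hbb.isCoboundedUnder_le hq2
      constructor
      · have hK : ({k | t k < (p : ℝ)} \ {k | k < j + 1}).Infinite :=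
          hfreq1.diff (Set.finite_Iio (j+1))
        apply Set.Infinite.mono _ (hK.image (Set.injOn_of_injective hnmono.injective))
        rintro _ ⟨k, ⟨hk1, hk2⟩, rfl⟩
        simp only [Set.mem_setOf_eq, Set.mem_diff, not_lt] at hk1 hk2 ⊢
        refine ⟨hMMmono (by omega : j + 1 ≤ k) (hnmem k), hg, ?_⟩
        rw [hj]
        exact hk1
      · have hK : ({k | (q : ℝ) < t k} \ {k | k < j + 1}).Infinite :=
          hfreq2.diff (Set.finite_Iio (j+1))
        apply Set.Infinite.mono _ (hK.image (Set.injOn_of_injective hnmono.injective))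
        rintro _ ⟨k, ⟨hk1, hk2⟩, rfl⟩
        simp only [Set.mem_setOf_eq, Set.mem_diff, not_lt] at hk1 hk2 ⊢
        refine ⟨hMMmono (by omega : j + 1 ≤ k) (hnmem k), hg, ?_⟩
        rw [hj]
        exact hk1
    exact ⟨limsup t atTop, tendsto_of_liminf_eq_limsup heq rfl hba hbb⟩
  -- now any functional, by scaling
  intro g
  set c : ℝ := max ‖g‖ 1 with hc
  have hc0 : 0 < c := lt_of_lt_of_le one_pos (le_max_right _ _)
  set g' : Y →L[ℝ] ℝ := c⁻¹ • g with hg'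
  have hg'n : ‖g'‖ ≤ 1 := by
    rw [hg']
    refine (_root_.norm_smul_le c⁻¹ g).trans ?_
    rw [norm_inv, Real.norm_eq_abs, abs_of_pos hc0]
    rw [inv_mul_le_iff₀ hc0, mul_one]
    exact le_max_left _ _
  obtain ⟨L, hL⟩ := main g' hg'n
  refine ⟨c * L, ?_⟩
  have : (fun k => g (x (nn k))) = fun k => c * g' (x (nn k)) := by
    funext k
    rw [hg']
    simp only [ContinuousLinearMap.coe_smul', Pi.smul_apply, smul_eq_mul]
    field_simp
  rw [this]
  exact hL.const_mul c

end NWc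

end RosenthalDev

theorem stmt19 {X : Type*} [NormedAddCommGroup X] [NormedSpace ℝ X] [CompleteSpace X]
    (hX : ¬ ∃ T : lp (fun _ : ℕ => ℝ) 1 →L[ℝ] X, ∃ c > (0 : ℝ), ∀ v, c * ‖v‖ ≤ ‖T v‖)
    (f : ℕ → X →L[ℝ] ℝ) (hf : WeakStarNull X f) :
    limsup (fun n => ‖f n‖) atTop ≤ 2 * betaQ f := by
  classical
  -- uniform bound via Banach–Steinhaus
  obtain ⟨C, hC⟩ : ∃ C, ∀ n, ‖f n‖ ≤ C := by
    apply banach_steinhaus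
    intro x
    have h1 : Tendsto (fun n => |f n x|) atTop (𝓝 |0|) := (hf x).abs
    obtain ⟨C, hC⟩ := h1.bddAbove_range
    exact ⟨C, fun n => by
      rw [Real.norm_eq_abs]
      exact hC (Set.mem_range_self n)⟩
  have hC0 : 0 ≤ C := le_trans (norm_nonneg (f 0)) (hC 0)
  set L : ℝ := limsup (fun n => ‖f n‖) atTop with hL
  -- betaQ basic facts
  set S : Set ℝ := { r | ∃ x : ℕ → X, (∀ n, x n ∈ closedBall (0 : X) 1) ∧ WeaklyNull X x ∧
    r = limsup (fun n => |f n (x n)|) atTop } with hS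
  have hSbeta : betaQ f = sSup S := rfl
  have h0S : (0 : ℝ) ∈ S := by
    refine ⟨fun _ => 0, fun n => by simp, fun g => by simpa using tendsto_const_nhds, ?_⟩
    simp only [map_zero, abs_zero]
    rw [limsup_const]
  have hSbdd : BddAbove S := by
    refine ⟨C, ?_⟩
    rintro r ⟨x, hx1, hx2, rfl⟩
    apply limsup_le_of_le
    · refine (isBoundedUnder_of ⟨0, fun n => abs_nonneg _⟩ :
        IsBoundedUnder (· ≥ ·) atTop fun n => |f n (x n)|).isCoboundedUnder_le
    · refine Filter.Eventually.of_forall fun n => ?_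
      have hxn : ‖x n‖ ≤ 1 := by
        have := hx1 n
        rwa [mem_closedBall_zero_iff] at this
      calc |f n (x n)| = ‖f n (x n)‖ := (Real.norm_eq_abs _).symm
        _ ≤ ‖f n‖ * ‖x n‖ := (f n).le_opNorm _
        _ ≤ C * 1 := mul_le_mul (hC n) hxn (norm_nonneg _) hC0
        _ = C := mul_one _
  have hbeta0 : 0 ≤ betaQ f := by
    rw [hSbeta]
    exact le_csSup hSbdd h0S
  -- main estimate
  have key : ∀ ε > (0 : ℝ), L ≤ 2 * betaQ f + 3 * ε := by
    intro ε hε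
    -- frequently the norm is large
    have hfreq : ∃ᶠ n in atTop, L - ε < ‖f n‖ := by
      apply frequently_lt_of_lt_limsup
      · exact (isBoundedUnder_of ⟨0, fun n => norm_nonneg _⟩ :
          IsBoundedUnder (· ≥ ·) atTop fun n => ‖f n‖).isCoboundedUnder_le
      · rw [← hL]; linarith
    obtain ⟨nseq, hnmono, hnprop⟩ := extraction_of_frequently_atTop hfreq
    -- near-norming vectors
    have hxx : ∀ k, ∃ v : X, ‖v‖ ≤ 1 ∧ L - 2*ε < f (nseq k) v := by
      intro k
      have h1 : L - 2*ε < ‖f (nseq k)‖ := by have := hnprop k; linarith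
      obtain ⟨v, hv1, hv2⟩ := (f (nseq k)).exists_lt_apply_of_lt_opNorm h1
      by_cases hsign : 0 ≤ f (nseq k) v
      · refine ⟨v, le_of_lt hv1, ?_⟩
        rwa [Real.norm_eq_abs, abs_of_nonneg hsign] at hv2
      · refine ⟨-v, by rw [norm_neg]; exact le_of_lt hv1, ?_⟩
        rw [map_neg]
        rw [Real.norm_eq_abs, abs_of_neg (not_le.mp hsign)] at hv2
        linarith
    choose xx hxx1 hxx2 using hxx
    -- weakly Cauchy subsequence
    obtain ⟨ψ, hψ, hcauchy⟩ := NWc.weakly_cauchy_subseq hX xx hxx1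
    choose Lg hLg using hcauchy
    -- diagonal extraction for the weak* null condition
    have hstep : ∀ a : ℕ, ∃ b : ℕ, a < b ∧ |f (nseq (ψ b)) (xx (ψ a))| < ε := by
      intro a
      have h1 : Tendsto (fun j => f (nseq (ψ j)) (xx (ψ a))) atTop (𝓝 0) :=
        (hf (xx (ψ a))).comp ((hnmono.comp hψ).tendsto_atTop)
      rw [Metric.tendsto_atTop] at h1
      obtain ⟨N, hN⟩ := h1 ε hε
      refine ⟨max (a+1) N, by omega, ?_⟩
      have := hN (max (a+1) N) (le_max_right _ _)
      rwa [Real.dist_eq, sub_zero] at this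
    obtain ⟨θ, hθ0, hθstep⟩ := NWc.exists_seq (0 : ℕ) hstep
    have hθmono : StrictMono θ := strictMono_nat_of_lt_succ fun t => (hθstep t).1
    -- the difference sequence
    set z : ℕ → X := fun t => (2:ℝ)⁻¹ • (xx (ψ (θ (t+1))) - xx (ψ (θ t))) with hz
    have hznorm : ∀ t, ‖z t‖ ≤ 1 := by
      intro t
      rw [hz]
      simp only
      rw [norm_smul, norm_inv, Real.norm_ofNat]
      have : ‖xx (ψ (θ (t+1))) - xx (ψ (θ t))‖ ≤ 2 := by
        calc ‖xx (ψ (θ (t+1))) - xx (ψ (θ t))‖ ≤ ‖xx (ψ (θ (t+1)))‖ + ‖xx (ψ (θ t))‖ :=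
              norm_sub_le _ _
          _ ≤ 1 + 1 := add_le_add (hxx1 _) (hxx1 _)
          _ = 2 := by norm_num
      calc (2:ℝ)⁻¹ * ‖xx (ψ (θ (t+1))) - xx (ψ (θ t))‖ ≤ (2:ℝ)⁻¹ * 2 := by
            apply mul_le_mul_of_nonneg_left this (by norm_num)
        _ = 1 := by norm_num
    have hzweak : ∀ g : X →L[ℝ] ℝ, Tendsto (fun t => g (z t)) atTop (𝓝 0) := by
      intro g
      have h1 : Tendsto (fun t => g (xx (ψ (θ (t+1))))) atTop (𝓝 (Lg g)) :=
        (hLg g).comp ((hθmono.comp (strictMono_id.add_const 1)).tendsto_atTop)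
      have h2 : Tendsto (fun t => g (xx (ψ (θ t)))) atTop (𝓝 (Lg g)) :=
        (hLg g).comp hθmono.tendsto_atTop
      have h3 : Tendsto (fun t => (2:ℝ)⁻¹ * (g (xx (ψ (θ (t+1)))) - g (xx (ψ (θ t)))))
          atTop (𝓝 ((2:ℝ)⁻¹ * (Lg g - Lg g))) := (h1.sub h2).const_mul _
      have heq : (fun t => g (z t)) =
          fun t => (2:ℝ)⁻¹ * (g (xx (ψ (θ (t+1)))) - g (xx (ψ (θ t)))) := by
        funext t
        rw [hz]
        simp only [map_smul, map_sub, smul_eq_mul]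
      rw [heq]
      simpa using h3
    -- the index map
    set ρ : ℕ → ℕ := fun t => nseq (ψ (θ (t+1))) with hρ
    have hρmono : StrictMono ρ :=
      hnmono.comp (hψ.comp (hθmono.comp (strictMono_id.add_const 1)))
    -- the assembled sequence
    set Z : ℕ → X := fun m => if h : ∃ t, ρ t = m then z h.choose else 0 with hZ
    have hZρ : ∀ t, Z (ρ t) = z t := by
      intro t
      have h : ∃ t', ρ t' = ρ t := ⟨t, rfl⟩
      rw [hZ]
      simp only [dif_pos h]
      congr 1
      exact hρmono.injective h.choose_spec
    have hZnorm : ∀ m, ‖Z m‖ ≤ 1 := by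
      intro m
      rw [hZ]
      by_cases h : ∃ t, ρ t = m
      · simp only [dif_pos h]; exact hznorm _
      · simp only [dif_neg h, norm_zero]; exact zero_le_one
    have hZweak : WeaklyNull X Z := by
      intro g
      rw [Metric.tendsto_atTop]
      intro δ hδ
      have h1 := hzweak g
      rw [Metric.tendsto_atTop] at h1
      obtain ⟨T, hT⟩ := h1 δ hδ
      refine ⟨ρ T, ?_⟩
      intro m hm
      rw [hZ]
      by_cases h : ∃ t, ρ t = m
      · simp only [dif_pos h]
        have ht := h.choose_spec
        have : T ≤ h.choose := by
          rw [← hρmono.le_iff_le, ht]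
          exact hm
        exact hT _ this
      · simp only [dif_neg h, map_zero]
        rw [dist_self]
        exact hδ
    -- lower bound on the limsup
    have hfm : ∀ t, (L - 3*ε)/2 ≤ |f (ρ t) (Z (ρ t))| := by
      intro t
      rw [hZρ t]
      have h1 : L - 2*ε < f (nseq (ψ (θ (t+1)))) (xx (ψ (θ (t+1)))) := hxx2 _
      have h2 : |f (nseq (ψ (θ (t+1)))) (xx (ψ (θ t)))| < ε := (hθstep t).2
      have h3 : f (ρ t) (z t) =
          (2:ℝ)⁻¹ * (f (ρ t) (xx (ψ (θ (t+1)))) - f (ρ t) (xx (ψ (θ t)))) := by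
        rw [hz]
        simp only [map_smul, map_sub, smul_eq_mul]
      have h4 : (L - 3*ε)/2 ≤ f (ρ t) (z t) := by
        rw [h3, hρ]
        have := abs_lt.mp h2
        nlinarith [h1, this.1]
      exact le_trans h4 (le_abs_self _)
    have hfreq2 : ∃ᶠ m in atTop, (L - 3*ε)/2 ≤ |f m (Z m)| := by
      apply hρmono.tendsto_atTop.frequently
      exact Filter.Frequently.of_forall hfm
    set r : ℝ := limsup (fun m => |f m (Z m)|) atTop with hr
    have hrS : r ∈ S := ⟨Z, fun m => by
        rw [mem_closedBall_zero_iff]; exact hZnorm m, hZweak, rfl⟩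
    have hrlow : (L - 3*ε)/2 ≤ r := by
      refine le_limsup_of_frequently_le hfreq2 (isBoundedUnder_of ⟨C, fun m => ?_⟩)
      calc |f m (Z m)| = ‖f m (Z m)‖ := (Real.norm_eq_abs _).symm
        _ ≤ ‖f m‖ * ‖Z m‖ := (f m).le_opNorm _
        _ ≤ C * 1 := mul_le_mul (hC m) (hZnorm m) (norm_nonneg _) hC0
        _ = C := mul_one _
    have hrbeta : r ≤ betaQ f := by
      rw [hSbeta]
      exact le_csSup hSbdd hrS
    linarith
  -- conclude
  have : ∀ ε' > (0:ℝ), L ≤ 2 * betaQ f + ε' := by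
    intro ε' hε'
    have := key (ε'/3) (by linarith)
    linarith
  exact le_of_forall_pos_le_add this
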